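/- For every ν > 0 and λ ∈ ℝ, the cumulative distribution function at 0 of the skew-t distribution coincides with that of the skew-normal distribution: ∫_{−∞}^0 2 t_ν(x) T_{ν+1}(λ x √((ν+1)/(ν + x²))) dx = 1/2 − arctan(λ)/π. In particular, the perturbation measure of the skew-t distribution equals arctan(λ)/π, the same as for the skew-normal distribution. -/

import Mathlib

open MeasureTheory Real

/-- The Student t density with ν degrees of freedom. -/
noncomputable def studentTPdf (ν : ℝ) (x : ℝ) : ℝ :=
  Real.Gamma ((ν + 1) / 2) / (Real.sqrt (ν * Real.pi) * Real.Gamma (ν / 2)) *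
    (1 + x ^ 2 / ν) ^ (-(ν + 1) / 2)

/-- The Student t cumulative distribution function with ν degrees of freedom. -/
noncomputable def studentTCdf (ν : ℝ) (x : ℝ) : ℝ := ∫ u in Set.Iic x, studentTPdf ν u

open Set Filter Topology

noncomputable def stC (ν : ℝ) : ℝ :=
  Real.Gamma ((ν + 1) / 2) / (Real.sqrt (ν * Real.pi) * Real.Gamma (ν / 2))

lemma stC_pos {ν : ℝ} (hν : 0 < ν) : 0 < stC ν := by
  have h1 : 0 < Real.Gamma ((ν + 1) / 2) := Real.Gamma_pos_of_pos (by linarith)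
  have h2 : 0 < Real.Gamma (ν / 2) := Real.Gamma_pos_of_pos (by linarith)
  have h3 : 0 < Real.sqrt (ν * Real.pi) := Real.sqrt_pos.2 (by positivity)
  exact div_pos h1 (by positivity)

lemma studentTPdf_eq (ν x : ℝ) :
    studentTPdf ν x = stC ν * (1 + x ^ 2 / ν) ^ (-(ν + 1) / 2) := rfl

lemma base_pos {ν : ℝ} (hν : 0 < ν) (x : ℝ) : 0 < 1 + x ^ 2 / ν := by positivity

lemma studentTPdf_pos {ν : ℝ} (hν : 0 < ν) (x : ℝ) : 0 < studentTPdf ν x :=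
  mul_pos (stC_pos hν) (Real.rpow_pos_of_pos (base_pos hν x) _)

lemma studentTPdf_continuous {ν : ℝ} (hν : 0 < ν) : Continuous (studentTPdf ν) := by
  apply continuous_const.mul
  apply Continuous.rpow_const
  · continuity
  · exact fun x => Or.inl (ne_of_gt (base_pos hν x))

lemma studentTPdf_integrable {ν : ℝ} (hν : 0 < ν) : Integrable (studentTPdf ν) := by
  have hr : (Module.finrank ℝ ℝ : ℝ) < ν + 1 := by
    simp [Module.finrank_self]; linarith
  have hbig : Integrable (fun x : ℝ => ((1 : ℝ) + ‖x‖ ^ 2) ^ (-(ν + 1) / 2)) :=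
    integrable_rpow_neg_one_add_norm_sq hr
  set m : ℝ := min 1 ν⁻¹ with hm
  have hm0 : 0 < m := lt_min one_pos (by positivity)
  refine ((hbig.const_mul (stC ν * m ^ (-(ν + 1) / 2))).mono'
    ((studentTPdf_continuous hν).aestronglyMeasurable) (Eventually.of_forall fun x => ?_))
  have hb : m * (1 + x ^ 2) ≤ 1 + x ^ 2 / ν := by
    have h1 : m ≤ 1 := min_le_left _ _
    have h2 : m ≤ ν⁻¹ := min_le_right _ _
    have : m * x ^ 2 ≤ x ^ 2 / ν := by
      rw [div_eq_inv_mul]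
      exact mul_le_mul_of_nonneg_right h2 (sq_nonneg x)
    nlinarith
  have key : (1 + x ^ 2 / ν) ^ (-(ν + 1) / 2) ≤ m ^ (-(ν + 1) / 2) * (1 + x ^ 2) ^ (-(ν + 1) / 2) := by
    rw [← Real.mul_rpow hm0.le (by positivity)]
    exact Real.rpow_le_rpow_of_nonpos (by positivity) hb (by linarith)
  rw [Real.norm_eq_abs, abs_of_pos (studentTPdf_pos hν x), studentTPdf_eq]
  simp only [Real.norm_eq_abs, sq_abs]
  calc stC ν * (1 + x ^ 2 / ν) ^ (-(ν + 1) / 2)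
      ≤ stC ν * (m ^ (-(ν + 1) / 2) * (1 + x ^ 2) ^ (-(ν + 1) / 2)) :=
        mul_le_mul_of_nonneg_left key (stC_pos hν).le
    _ = stC ν * m ^ (-(ν + 1) / 2) * (1 + x ^ 2) ^ (-(ν + 1) / 2) := by ring

lemma studentTCdf_hasDerivAt {ν : ℝ} (hν : 0 < ν) (y : ℝ) :
    HasDerivAt (studentTCdf ν) (studentTPdf ν y) y := by
  have hint : Integrable (studentTPdf ν) := studentTPdf_integrable hν
  have heq : ∀ z : ℝ, studentTCdf ν z = studentTCdf ν 0 + ∫ u in (0:ℝ)..z, studentTPdf ν u := by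
    intro z
    have := intervalIntegral.integral_Iic_sub_Iic (hint.integrableOn) (hint.integrableOn)
      (a := 0) (b := z) (f := studentTPdf ν) (μ := volume)
    simp only [studentTCdf]
    linarith [this]
  have hd : HasDerivAt (fun z => studentTCdf ν 0 + ∫ u in (0:ℝ)..z, studentTPdf ν u)
      (studentTPdf ν y) y := by
    apply HasDerivAt.const_add
    exact intervalIntegral.integral_hasDerivAt_right (hint.intervalIntegrable)
      (hint.aestronglyMeasurable.stronglyMeasurableAtFilter)
      (studentTPdf_continuous hν).continuousAt
  exact hd.congr_of_eventuallyEq (Eventually.of_forall heq)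

lemma studentTCdf_nonneg {ν : ℝ} (hν : 0 < ν) (y : ℝ) : 0 ≤ studentTCdf ν y :=
  setIntegral_nonneg measurableSet_Iic fun x _ => (studentTPdf_pos hν x).le

lemma studentTCdf_le {ν : ℝ} (hν : 0 < ν) (y : ℝ) :
    studentTCdf ν y ≤ ∫ x, studentTPdf ν x :=
  setIntegral_le_integral (studentTPdf_integrable hν)
    (Eventually.of_forall fun x => (studentTPdf_pos hν x).le)

lemma studentTCdf_tendsto_atBot {ν : ℝ} (hν : 0 < ν) :
    Tendsto (studentTCdf ν) atBot (𝓝 0) := by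
  have h : ∀ y : ℝ, studentTCdf ν y = ∫ x, (Set.Iic y).indicator (studentTPdf ν) x := by
    intro y; rw [integral_indicator measurableSet_Iic]; rfl
  have key : Tendsto (fun y : ℝ => ∫ x, (Set.Iic y).indicator (studentTPdf ν) x) atBot (𝓝 0) := by
    have h0 : (0 : ℝ) = ∫ x : ℝ, (0 : ℝ) := by simp
    rw [h0]
    apply tendsto_integral_filter_of_dominated_convergence (studentTPdf ν)
    · exact Eventually.of_forall fun y =>
        ((studentTPdf_continuous hν).aestronglyMeasurable).indicator measurableSet_Iic
    · refine Eventually.of_forall fun y => Eventually.of_forall fun x => ?_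
      rw [Real.norm_eq_abs]
      by_cases hx : x ∈ Set.Iic y
      · rw [Set.indicator_of_mem hx, abs_of_pos (studentTPdf_pos hν x)]
      · rw [Set.indicator_of_notMem hx]; simpa using (studentTPdf_pos hν x).le
    · exact studentTPdf_integrable hν
    · refine Eventually.of_forall fun x => ?_
      have : ∀ᶠ y in (atBot : Filter ℝ), (Set.Iic y).indicator (studentTPdf ν) x = 0 := by
        filter_upwards [eventually_lt_atBot x] with y hy
        exact Set.indicator_of_notMem (by simpa using hy.not_ge) _
      exact Tendsto.congr' (this.mono fun y hy => hy.symm) tendsto_const_nhds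
  exact key.congr fun y => (h y).symm

noncomputable def Kc (ν : ℝ) : ℝ := 2 * stC ν * stC (ν + 1) * Real.sqrt (ν + 1) * ν ^ ((ν + 1) / 2)

lemma key_identity {ν : ℝ} (hν : 0 < ν) (l x : ℝ) :
    2 * studentTPdf ν x *
      (studentTPdf (ν + 1) (l * x * Real.sqrt ((ν + 1) / (ν + x ^ 2))) *
        (x * Real.sqrt ((ν + 1) / (ν + x ^ 2))))
      = Kc ν * (x * (ν + (1 + l ^ 2) * x ^ 2) ^ (-(ν + 2) / 2)) := by
  have hB : (0 : ℝ) < ν + x ^ 2 := by positivity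
  have hA : (0 : ℝ) < ν + (1 + l ^ 2) * x ^ 2 := by positivity
  set B := ν + x ^ 2 with hBdef
  set A := ν + (1 + l ^ 2) * x ^ 2 with hAdef
  have h1 : 1 + x ^ 2 / ν = B / ν := by field_simp; exact hBdef.symm
  have harg : 1 + (l * x * Real.sqrt ((ν + 1) / B)) ^ 2 / (ν + 1) = A / B := by
    rw [mul_pow, mul_pow, Real.sq_sqrt (by positivity : (0:ℝ) ≤ (ν + 1) / B)]
    rw [hAdef, hBdef]
    field_simp
    ring
  have hsq : Real.sqrt ((ν + 1) / B) = Real.sqrt (ν + 1) * B ^ (-(1 / 2) : ℝ) := by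
    rw [Real.sqrt_div (by linarith : (0:ℝ) ≤ ν + 1) B, Real.sqrt_eq_rpow B, div_eq_mul_inv,
      ← Real.rpow_neg hB.le]
  have h3 : (B / ν) ^ (-(ν + 1) / 2) = ν ^ ((ν + 1) / 2) * B ^ (-(ν + 1) / 2) := by
    rw [Real.div_rpow hB.le hν.le]
    have : ν ^ (-(ν + 1) / 2) = (ν ^ ((ν + 1) / 2))⁻¹ := by
      rw [neg_div, Real.rpow_neg hν.le]
    rw [this, div_eq_mul_inv, inv_inv, mul_comm]
  have h4 : (A / B) ^ (-(ν + 2) / 2) = A ^ (-(ν + 2) / 2) * B ^ ((ν + 2) / 2) := by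
    rw [Real.div_rpow hA.le hB.le]
    have : B ^ (-(ν + 2) / 2) = (B ^ ((ν + 2) / 2))⁻¹ := by
      rw [neg_div, Real.rpow_neg hB.le]
    rw [this, div_eq_mul_inv, inv_inv]
  have hBpow : B ^ (-(ν + 1) / 2) * B ^ ((ν + 2) / 2) * B ^ (-(1 / 2) : ℝ) = 1 := by
    rw [← Real.rpow_add hB, ← Real.rpow_add hB,
      show -(ν + 1) / 2 + (ν + 2) / 2 + -(1 / 2) = (0:ℝ) by ring, Real.rpow_zero]
  calc 2 * studentTPdf ν x *
      (studentTPdf (ν + 1) (l * x * Real.sqrt ((ν + 1) / B)) * (x * Real.sqrt ((ν + 1) / B)))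
      = 2 * (stC ν * (1 + x ^ 2 / ν) ^ (-(ν + 1) / 2)) *
        ((stC (ν + 1) * (1 + (l * x * Real.sqrt ((ν + 1) / B)) ^ 2 / (ν + 1)) ^ (-(ν + 1 + 1) / 2)) *
          (x * Real.sqrt ((ν + 1) / B))) := rfl
    _ = 2 * (stC ν * (ν ^ ((ν + 1) / 2) * B ^ (-(ν + 1) / 2))) *
        ((stC (ν + 1) * (A ^ (-(ν + 2) / 2) * B ^ ((ν + 2) / 2))) *
          (x * (Real.sqrt (ν + 1) * B ^ (-(1 / 2) : ℝ)))) := by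
        rw [h1, harg, show ν + 1 + 1 = ν + 2 by ring, h3, h4, hsq]
    _ = Kc ν * (x * A ^ (-(ν + 2) / 2)) *
        (B ^ (-(ν + 1) / 2) * B ^ ((ν + 2) / 2) * B ^ (-(1 / 2) : ℝ)) := by
        rw [Kc]; ring
    _ = Kc ν * (x * A ^ (-(ν + 2) / 2)) := by rw [hBpow, mul_one]

lemma Kc_eval {ν : ℝ} (hν : 0 < ν) : Kc ν * ν ^ (-(ν / 2) : ℝ) / ν = 1 / Real.pi := by
  have hΓa : 0 < Real.Gamma ((ν + 1) / 2) := Real.Gamma_pos_of_pos (by linarith)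
  have hΓb : 0 < Real.Gamma (ν / 2) := Real.Gamma_pos_of_pos (by linarith)
  have hg1 : Real.Gamma ((ν + 1 + 1) / 2) = ν / 2 * Real.Gamma (ν / 2) := by
    rw [show (ν + 1 + 1) / 2 = ν / 2 + 1 by ring, Real.Gamma_add_one (by positivity)]
  have hra : ν ^ ((ν + 1) / 2) * ν ^ (-(ν / 2) : ℝ) = Real.sqrt ν := by
    rw [← Real.rpow_add hν, show (ν + 1) / 2 + -(ν / 2) = 1 / 2 by ring]
    exact (Real.sqrt_eq_rpow ν).symm
  have hs1 : Real.sqrt (ν * Real.pi) = Real.sqrt ν * Real.sqrt Real.pi := Real.sqrt_mul hν.le _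
  have hs2 : Real.sqrt ((ν + 1) * Real.pi) = Real.sqrt (ν + 1) * Real.sqrt Real.pi :=
    Real.sqrt_mul (by linarith) _
  have hπ : Real.sqrt Real.pi * Real.sqrt Real.pi = Real.pi := Real.mul_self_sqrt Real.pi_pos.le
  have hsνne : Real.sqrt ν ≠ 0 := by positivity
  have hsν1ne : Real.sqrt (ν + 1) ≠ 0 := by positivity
  have hsπne : Real.sqrt Real.pi ≠ 0 := by positivity
  rw [Kc, stC, stC, hg1, hs1, hs2]
  rw [div_eq_div_iff (by positivity) Real.pi_pos.ne']
  calc 2 * (Real.Gamma ((ν + 1) / 2) / (Real.sqrt ν * Real.sqrt Real.pi * Real.Gamma (ν / 2))) *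
        (ν / 2 * Real.Gamma (ν / 2) /
          (Real.sqrt (ν + 1) * Real.sqrt Real.pi * Real.Gamma ((ν + 1) / 2))) *
        Real.sqrt (ν + 1) * ν ^ ((ν + 1) / 2) * ν ^ (-(ν / 2) : ℝ) * Real.pi
      = (ν ^ ((ν + 1) / 2) * ν ^ (-(ν / 2) : ℝ)) *
          (2 * (Real.Gamma ((ν + 1) / 2) / (Real.sqrt ν * Real.sqrt Real.pi * Real.Gamma (ν / 2))) *
          (ν / 2 * Real.Gamma (ν / 2) /
            (Real.sqrt (ν + 1) * Real.sqrt Real.pi * Real.Gamma ((ν + 1) / 2))) *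
          Real.sqrt (ν + 1) * Real.pi) := by ring
    _ = ν * 1 := by
        rw [hra]
        field_simp
        ring_nf
        rw [Real.sq_sqrt Real.pi_pos.le]
    _ = 1 * ν := by rw [one_mul, mul_one]

lemma aux_hasDerivAt {ν b : ℝ} (hν : 0 < ν) (hb : 0 < b) (y : ℝ) :
    HasDerivAt (fun y : ℝ => (ν + b * y ^ 2) ^ (-(ν / 2) : ℝ) / (-ν * b))
      (y * (ν + b * y ^ 2) ^ (-(ν + 2) / 2)) y := by
  have hA : (0 : ℝ) < ν + b * y ^ 2 := by positivity
  have hu : HasDerivAt (fun y : ℝ => ν + b * y ^ 2) (b * (2 * y ^ 1)) y :=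
    ((hasDerivAt_pow 2 y).const_mul b).const_add ν
  have h2 := (hu.rpow_const (p := (-(ν / 2) : ℝ)) (Or.inl hA.ne')).div_const (-ν * b)
  refine h2.congr_deriv ?_
  rw [show (-(ν / 2) : ℝ) - 1 = -(ν + 2) / 2 by ring]
  field_simp

lemma aux_tendsto {ν b : ℝ} (hν : 0 < ν) (hb : 0 < b) :
    Tendsto (fun y : ℝ => (ν + b * y ^ 2) ^ (-(ν / 2) : ℝ) / (-ν * b)) atTop (𝓝 0) := by
  have h1 : Tendsto (fun y : ℝ => ν + b * y ^ 2) atTop atTop := by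
    apply tendsto_atTop_add_const_left
    exact (tendsto_pow_atTop (two_ne_zero)).const_mul_atTop hb
  have h2 : Tendsto (fun y : ℝ => (ν + b * y ^ 2) ^ (-(ν / 2) : ℝ)) atTop (𝓝 0) :=
    (tendsto_rpow_neg_atTop (by positivity : (0:ℝ) < ν / 2)).comp h1
  simpa using h2.div_const (-ν * b)

lemma aux_integrableOn_Ioi {ν b : ℝ} (hν : 0 < ν) (hb : 0 < b) :
    IntegrableOn (fun y : ℝ => y * (ν + b * y ^ 2) ^ (-(ν + 2) / 2)) (Ioi 0) := by
  apply integrableOn_Ioi_deriv_of_nonneg ((aux_hasDerivAt hν hb 0).continuousAt.continuousWithinAt)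
    (fun y _ => aux_hasDerivAt hν hb y)
  · intro y hy
    have hy0 : (0:ℝ) < y := hy
    positivity
  · exact aux_tendsto hν hb

lemma aux_integral_Ioi {ν b : ℝ} (hν : 0 < ν) (hb : 0 < b) :
    ∫ y in Ioi (0:ℝ), y * (ν + b * y ^ 2) ^ (-(ν + 2) / 2)
      = ν ^ (-(ν / 2) : ℝ) / (b * ν) := by
  rw [integral_Ioi_of_hasDerivAt_of_tendsto
    ((aux_hasDerivAt hν hb 0).continuousAt.continuousWithinAt)
    (fun y _ => aux_hasDerivAt hν hb y) (aux_integrableOn_Ioi hν hb) (aux_tendsto hν hb)]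
  rw [show ν + b * (0:ℝ) ^ 2 = ν by norm_num, zero_sub]
  field_simp

lemma aux_integrableOn_Iic {ν b : ℝ} (hν : 0 < ν) (hb : 0 < b) :
    IntegrableOn (fun x : ℝ => x * (ν + b * x ^ 2) ^ (-(ν + 2) / 2)) (Iic 0) := by
  have h := (aux_integrableOn_Ioi hν hb).neg
  have h2 : IntegrableOn ((fun y : ℝ => -(y * (ν + b * y ^ 2) ^ (-(ν + 2) / 2))) ∘ (fun x : ℝ => -x))
      ((fun x : ℝ => -x) ⁻¹' (Ioi 0)) := by
    exact (MeasurePreserving.integrableOn_comp_preimage (Measure.measurePreserving_neg _)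
      (Homeomorph.neg ℝ).measurableEmbedding).2 h
  have h3 : ((fun x : ℝ => -x) ⁻¹' (Ioi 0)) = Iio 0 := by
    ext x; simp [neg_pos]
  rw [h3] at h2
  rw [IntegrableOn, ← Measure.restrict_congr_set Iio_ae_eq_Iic]
  apply h2.congr_fun ?_ measurableSet_Iio
  intro x _
  simp only [Function.comp_apply]
  rw [show (-x) ^ 2 = x ^ 2 by ring]
  ring

lemma aux_integral_Iic {ν b : ℝ} (hν : 0 < ν) (hb : 0 < b) :
    ∫ x in Iic (0:ℝ), x * (ν + b * x ^ 2) ^ (-(ν + 2) / 2)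
      = -(ν ^ (-(ν / 2) : ℝ) / (b * ν)) := by
  have h : ∀ x : ℝ, x * (ν + b * x ^ 2) ^ (-(ν + 2) / 2)
      = (fun y : ℝ => -(y * (ν + b * y ^ 2) ^ (-(ν + 2) / 2))) (-x) := by
    intro x; simp only [neg_neg, neg_mul]; ring_nf
  calc ∫ x in Iic (0:ℝ), x * (ν + b * x ^ 2) ^ (-(ν + 2) / 2)
      = ∫ x in Iic (0:ℝ), (fun y : ℝ => -(y * (ν + b * y ^ 2) ^ (-(ν + 2) / 2))) (-x) := by
        simp_rw [← h]
    _ = ∫ y in Ioi (-(0:ℝ)), -(y * (ν + b * y ^ 2) ^ (-(ν + 2) / 2)) :=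
        integral_comp_neg_Iic 0 (fun y : ℝ => -(y * (ν + b * y ^ 2) ^ (-(ν + 2) / 2)))
    _ = -(ν ^ (-(ν / 2) : ℝ) / (b * ν)) := by
        rw [neg_zero, integral_neg, aux_integral_Ioi hν hb]

section Main
variable {ν : ℝ}

lemma sqrt_term_continuous (hν : 0 < ν) :
    Continuous (fun x : ℝ => Real.sqrt ((ν + 1) / (ν + x ^ 2))) := by
  apply Real.continuous_sqrt.comp
  exact continuous_const.div (by continuity) (fun x => by positivity)

lemma studentTCdf_continuous (hν : 0 < ν) : Continuous (studentTCdf ν) :=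
  continuous_iff_continuousAt.2 fun y => (studentTCdf_hasDerivAt hν y).continuousAt

lemma F_cont (hν : 0 < ν) (l : ℝ) :
    Continuous (fun x : ℝ =>
      2 * studentTPdf ν x * studentTCdf (ν + 1) (l * x * Real.sqrt ((ν + 1) / (ν + x ^ 2)))) := by
  apply Continuous.mul (continuous_const.mul (studentTPdf_continuous hν))
  exact (studentTCdf_continuous (by linarith)).comp
    ((continuous_const.mul continuous_id).mul (sqrt_term_continuous hν))

lemma F_integrableOn (hν : 0 < ν) (l : ℝ) :
    IntegrableOn (fun x : ℝ =>
      2 * studentTPdf ν x * studentTCdf (ν + 1) (l * x * Real.sqrt ((ν + 1) / (ν + x ^ 2))))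
      (Iic 0) := by
  have hν1 : (0:ℝ) < ν + 1 := by linarith
  set M := ∫ x, studentTPdf (ν + 1) x with hM
  refine (((studentTPdf_integrable hν).const_mul (2 * M)).restrict (s := Iic 0)).mono'
    ((F_cont hν l).aestronglyMeasurable) (Eventually.of_forall fun x => ?_)
  have h1 : 0 ≤ studentTCdf (ν + 1) (l * x * Real.sqrt ((ν + 1) / (ν + x ^ 2))) :=
    studentTCdf_nonneg hν1 _
  have h2 : studentTCdf (ν + 1) (l * x * Real.sqrt ((ν + 1) / (ν + x ^ 2))) ≤ M :=
    studentTCdf_le hν1 _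
  have hp := studentTPdf_pos hν x
  rw [Real.norm_eq_abs, abs_of_nonneg (by positivity)]
  calc 2 * studentTPdf ν x * studentTCdf (ν + 1) (l * x * Real.sqrt ((ν + 1) / (ν + x ^ 2)))
      ≤ 2 * studentTPdf ν x * M := by nlinarith
    _ = 2 * M * studentTPdf ν x := by ring

lemma Fskew_hasDerivAt (hν : 0 < ν) (l₀ : ℝ) :
    HasDerivAt (fun l : ℝ => ∫ x in Iic (0:ℝ),
        2 * studentTPdf ν x * studentTCdf (ν + 1) (l * x * Real.sqrt ((ν + 1) / (ν + x ^ 2))))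
      (-(1 / Real.pi) * (1 + l₀ ^ 2)⁻¹) l₀ := by
  have hν1 : (0:ℝ) < ν + 1 := by linarith
  have hb₀ : (0:ℝ) < 1 + l₀ ^ 2 := by positivity
  have main := hasDerivAt_integral_of_dominated_loc_of_deriv_le (μ := volume.restrict (Iic 0))
    (F := fun (l : ℝ) (x : ℝ) =>
      2 * studentTPdf ν x * studentTCdf (ν + 1) (l * x * Real.sqrt ((ν + 1) / (ν + x ^ 2))))
    (F' := fun (l : ℝ) (x : ℝ) => Kc ν * (x * (ν + (1 + l ^ 2) * x ^ 2) ^ (-(ν + 2) / 2)))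
    (x₀ := l₀) (s := Metric.ball l₀ 1) (Metric.ball_mem_nhds l₀ one_pos)
    (bound := fun x => |Kc ν| * -(x * (ν + 1 * x ^ 2) ^ (-(ν + 2) / 2)))
    ?_ ?_ ?_ ?_ ?_ ?_
  · have heq : (∫ x in Iic (0:ℝ), Kc ν * (x * (ν + (1 + l₀ ^ 2) * x ^ 2) ^ (-(ν + 2) / 2)))
        = -(1 / Real.pi) * (1 + l₀ ^ 2)⁻¹ := by
      rw [MeasureTheory.integral_const_mul, aux_integral_Iic hν hb₀]
      obtain ⟨c, hc⟩ : ∃ c : ℝ, c = 1 + l₀ ^ 2 := ⟨_, rfl⟩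
      rw [← hc]
      rw [show Kc ν * -(ν ^ (-(ν / 2) : ℝ) / (c * ν))
          = -(Kc ν * ν ^ (-(ν / 2) : ℝ) / ν) * c⁻¹ from by ring, Kc_eval hν]
    rw [← heq]
    exact main.2
  · exact Eventually.of_forall fun l => ((F_cont hν l).aestronglyMeasurable)
  · exact F_integrableOn hν l₀
  · exact Continuous.aestronglyMeasurable <| by
      apply continuous_const.mul
      apply Continuous.mul continuous_id
      apply Continuous.rpow_const (by continuity)
      exact fun x => Or.inl (by positivity)
  · rw [ae_restrict_iff' measurableSet_Iic]
    refine Eventually.of_forall fun x hx => fun l _ => ?_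
    have hx0 : x ≤ 0 := hx
    have hA : (0:ℝ) < ν + (1 + l ^ 2) * x ^ 2 := by positivity
    have hB : (0:ℝ) < ν + 1 * x ^ 2 := by positivity
    rw [Real.norm_eq_abs, abs_mul, abs_mul]
    have h1 : |x| = -x := abs_of_nonpos hx0
    have h2 : |(ν + (1 + l ^ 2) * x ^ 2) ^ (-(ν + 2) / 2)| =
        (ν + (1 + l ^ 2) * x ^ 2) ^ (-(ν + 2) / 2) :=
      abs_of_pos (Real.rpow_pos_of_pos hA _)
    rw [h1, h2]
    have h3 : (ν + (1 + l ^ 2) * x ^ 2) ^ (-(ν + 2) / 2) ≤ (ν + 1 * x ^ 2) ^ (-(ν + 2) / 2) := by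
      apply Real.rpow_le_rpow_of_nonpos hB (by nlinarith) (by linarith)
    calc |Kc ν| * (-x * (ν + (1 + l ^ 2) * x ^ 2) ^ (-(ν + 2) / 2))
        ≤ |Kc ν| * (-x * (ν + 1 * x ^ 2) ^ (-(ν + 2) / 2)) := by
          apply mul_le_mul_of_nonneg_left _ (abs_nonneg _)
          exact mul_le_mul_of_nonneg_left h3 (by linarith)
      _ = |Kc ν| * -(x * (ν + 1 * x ^ 2) ^ (-(ν + 2) / 2)) := by ring
  · exact ((aux_integrableOn_Iic hν one_pos).neg.const_mul _)
  · refine Eventually.of_forall fun x => fun l _ => ?_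
    have hc : HasDerivAt (fun l : ℝ => l * (x * Real.sqrt ((ν + 1) / (ν + x ^ 2))))
        (x * Real.sqrt ((ν + 1) / (ν + x ^ 2))) l :=
      hasDerivAt_mul_const _
    have hcdf := (studentTCdf_hasDerivAt hν1
      (l * (x * Real.sqrt ((ν + 1) / (ν + x ^ 2))))).comp l hc
    have hder := hcdf.const_mul (2 * studentTPdf ν x)
    have hfun : (fun l : ℝ => 2 * studentTPdf ν x *
        studentTCdf (ν + 1) (l * x * Real.sqrt ((ν + 1) / (ν + x ^ 2))))
        = (fun l : ℝ => 2 * studentTPdf ν x *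
        studentTCdf (ν + 1) (l * (x * Real.sqrt ((ν + 1) / (ν + x ^ 2))))) := by
      funext l; rw [mul_assoc l x]
    rw [hfun]
    refine hder.congr_deriv ?_
    rw [← mul_assoc l x]
    exact (key_identity hν l x)

end Main

section Main2
variable {ν : ℝ}

lemma F_bound (hν : 0 < ν) (l x : ℝ) :
    ‖2 * studentTPdf ν x * studentTCdf (ν + 1) (l * x * Real.sqrt ((ν + 1) / (ν + x ^ 2)))‖
      ≤ 2 * (∫ y, studentTPdf (ν + 1) y) * studentTPdf ν x := by
  have hν1 : (0:ℝ) < ν + 1 := by linarith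
  have h1 : 0 ≤ studentTCdf (ν + 1) (l * x * Real.sqrt ((ν + 1) / (ν + x ^ 2))) :=
    studentTCdf_nonneg hν1 _
  have h2 : studentTCdf (ν + 1) (l * x * Real.sqrt ((ν + 1) / (ν + x ^ 2)))
      ≤ ∫ y, studentTPdf (ν + 1) y := studentTCdf_le hν1 _
  have hp := studentTPdf_pos hν x
  rw [Real.norm_eq_abs, abs_of_nonneg (by positivity)]
  nlinarith

lemma Fskew_tendsto_atTop (hν : 0 < ν) :
    Tendsto (fun l : ℝ => ∫ x in Iic (0:ℝ),
      2 * studentTPdf ν x * studentTCdf (ν + 1) (l * x * Real.sqrt ((ν + 1) / (ν + x ^ 2))))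
      atTop (𝓝 0) := by
  have hν1 : (0:ℝ) < ν + 1 := by linarith
  have h0 : (𝓝 (0:ℝ)) = 𝓝 (∫ x in Iic (0:ℝ), (0:ℝ)) := by simp
  rw [h0]
  apply tendsto_integral_filter_of_dominated_convergence
    (fun x => 2 * (∫ y, studentTPdf (ν + 1) y) * studentTPdf ν x)
  · exact Eventually.of_forall fun l => (F_cont hν l).aestronglyMeasurable
  · exact Eventually.of_forall fun l => Eventually.of_forall fun x => F_bound hν l x
  · exact (((studentTPdf_integrable hν).const_mul _)).restrict
  · rw [← Measure.restrict_congr_set Iio_ae_eq_Iic, ae_restrict_iff' measurableSet_Iio]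
    refine Eventually.of_forall fun x hx => ?_
    have hx0 : x < 0 := hx
    have hw : 0 < Real.sqrt ((ν + 1) / (ν + x ^ 2)) := Real.sqrt_pos.2 (by positivity)
    have hc : x * Real.sqrt ((ν + 1) / (ν + x ^ 2)) < 0 := mul_neg_of_neg_of_pos hx0 hw
    have h1 : Tendsto (fun l : ℝ => l * (x * Real.sqrt ((ν + 1) / (ν + x ^ 2)))) atTop atBot :=
      Tendsto.atTop_mul_const_of_neg hc tendsto_id
    have h2 : Tendsto (fun l : ℝ =>
        studentTCdf (ν + 1) (l * x * Real.sqrt ((ν + 1) / (ν + x ^ 2)))) atTop (𝓝 0) := by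
      have h3 := (studentTCdf_tendsto_atBot hν1).comp h1
      apply h3.congr
      intro l
      simp only [Function.comp_apply, mul_assoc]
    have h4 := h2.const_mul (2 * studentTPdf ν x)
    simpa [mul_assoc] using h4

theorem skew_t_cdf_at_zero' (hν : 0 < ν) (l : ℝ) :
    ∫ x in Set.Iic (0 : ℝ),
        2 * studentTPdf ν x * studentTCdf (ν + 1) (l * x * Real.sqrt ((ν + 1) / (ν + x ^ 2)))
      = 1 / 2 - Real.arctan l / Real.pi := by
  set F : ℝ → ℝ := fun t => ∫ x in Set.Iic (0 : ℝ),
      2 * studentTPdf ν x * studentTCdf (ν + 1) (t * x * Real.sqrt ((ν + 1) / (ν + x ^ 2)))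
    with hF
  have hG : ∀ t : ℝ, HasDerivAt (fun t => F t + Real.arctan t / Real.pi) 0 t := by
    intro t
    have h1 := (Fskew_hasDerivAt hν t).add ((Real.hasDerivAt_arctan t).div_const Real.pi)
    refine h1.congr_deriv ?_
    have h2 : (0:ℝ) < 1 + t ^ 2 := by positivity
    field_simp
    ring
  have hconst : ∀ t : ℝ, F t + Real.arctan t / Real.pi = F 0 + Real.arctan 0 / Real.pi :=
    fun t => is_const_of_deriv_eq_zero (fun s => (hG s).differentiableAt)
      (fun s => (hG s).deriv) t 0
  have hFeq : ∀ t : ℝ, F t = F 0 - Real.arctan t / Real.pi := by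
    intro t
    have := hconst t
    rw [Real.arctan_zero, zero_div, add_zero] at this
    linarith
  have hlim1 : Tendsto F atTop (𝓝 (F 0 - Real.pi / 2 / Real.pi)) := by
    apply Tendsto.congr (fun t => (hFeq t).symm)
    exact tendsto_const_nhds.sub
      ((tendsto_nhds_of_tendsto_nhdsWithin Real.tendsto_arctan_atTop).div_const Real.pi)
  have hlim2 : Tendsto F atTop (𝓝 0) := Fskew_tendsto_atTop hν
  have h0 : F 0 - Real.pi / 2 / Real.pi = 0 := tendsto_nhds_unique hlim1 hlim2
  have hF0 : F 0 = 1 / 2 := by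
    have hhalf : Real.pi / 2 / Real.pi = 1 / 2 := by
      rw [div_div, div_eq_iff (by positivity : (2 * Real.pi : ℝ) ≠ 0)]
      ring
    linarith [h0, hhalf.symm ▸ h0]
  rw [show (∫ x in Set.Iic (0 : ℝ),
      2 * studentTPdf ν x * studentTCdf (ν + 1) (l * x * Real.sqrt ((ν + 1) / (ν + x ^ 2)))) = F l
    from rfl, hFeq l, hF0]

end Main2


/-- For every ν > 0 and λ ∈ ℝ, the cdf at 0 of the skew-t
distribution coincides with that of the skew-normal distribution:
S(0;λ) = 1/2 − arctan(λ)/π, so the perturbation measure of the skew-t equals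
arctan(λ)/π, as for the skew-normal distribution. -/
theorem skew_t_cdf_at_zero (ν : ℝ) (hν : 0 < ν) (l : ℝ) :
    ∫ x in Set.Iic (0 : ℝ),
        2 * studentTPdf ν x * studentTCdf (ν + 1) (l * x * Real.sqrt ((ν + 1) / (ν + x ^ 2)))
      = 1 / 2 - Real.arctan l / Real.pi := by
  exact skew_t_cdf_at_zero' hν l
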